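/- Multiplicative local slice theorem, part (b): With s a G_m-local slice of degree d with denominator c, every weight of a semi-invariant in R_c is divisible by d (i.e., if a ∈ R_c is a semi-invariant of weight t^k then d | k), and the map π: R_c → (R_c)^{G_m} obtained from the isomorphism R_c ≅ (R_c)^{G_m}[y^{±1}] (y ↦ s) followed by y ↦ 1 is a surjective (R_c)^{G_m}-algebra homomorphism with kernel the principal ideal (s − 1). -/

import Mathlib

open LaurentPolynomial

namespace Stmt14Helper

variable {A B : Type*} [CommRing A] [CommRing B]

/-- `T` as a monoid hom. -/
noncomputable def Tmh (B : Type*) [CommRing B] : Multiplicative ℤ →* LaurentPolynomial B where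
  toFun k := T (Multiplicative.toAdd k)
  map_one' := T_zero
  map_mul' _ _ := T_add _ _

/-- `mapRange` of a ring hom, as a ring hom on Laurent polynomials. -/
noncomputable def mr (f : A →+* B) : LaurentPolynomial A →+* LaurentPolynomial B :=
  AddMonoidAlgebra.liftNCRingHom (C.comp f) (Tmh B) fun _ _ => Commute.all _ _

lemma mr_apply (f : A →+* B) (p : LaurentPolynomial A) :
    (mr f p).coeff = Finsupp.mapRange f (map_zero f) p.coeff := by
  induction p using AddMonoidAlgebra.induction_linear with
  | zero => simp
  | add p q hp hq =>
      rw [map_add, AddMonoidAlgebra.coeff_add, AddMonoidAlgebra.coeff_add, hp, hq,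
        Finsupp.mapRange_add (map_add f)]
  | single k r =>
      rw [AddMonoidAlgebra.coeff_single, Finsupp.mapRange_single]
      show AddMonoidAlgebra.coeff (AddMonoidAlgebra.liftNC _ _ _) = _
      rw [AddMonoidAlgebra.liftNC_single]
      rw [← AddMonoidAlgebra.coeff_single, single_eq_C_mul_T]
      rfl

/-- Evaluation at `T = 1`, as a ring hom. -/
noncomputable def eps (A : Type*) [CommRing A] : LaurentPolynomial A →+* A :=
  AddMonoidAlgebra.liftNCRingHom (RingHom.id A) 1 fun _ _ => Commute.all _ _

lemma eps_apply (p : LaurentPolynomial A) : eps A p = p.coeff.sum fun _ r => r := by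
  conv_lhs => rw [← AddMonoidAlgebra.sum_coeff_single p]
  rw [map_finsuppSum]
  refine Finsupp.sum_congr fun k _ => ?_
  show AddMonoidAlgebra.liftNC _ _ _ = _
  rw [AddMonoidAlgebra.liftNC_single]
  simp

/-- The comultiplication-like map `single k r ↦ single k (single k r)`, as a ring hom. -/
noncomputable def delta (A : Type*) [CommRing A] :
    LaurentPolynomial A →+* LaurentPolynomial (LaurentPolynomial A) :=
  AddMonoidAlgebra.liftNCRingHom (C.comp C)
    { toFun := fun k => C (T (Multiplicative.toAdd k)) * T (Multiplicative.toAdd k)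
      map_one' := by
        show C (T (0:ℤ)) * T (0:ℤ) = 1
        simp
      map_mul' := fun x y => by
        show C (T (Multiplicative.toAdd x + Multiplicative.toAdd y)) *
            T (Multiplicative.toAdd x + Multiplicative.toAdd y) = _
        simp only [T_add, map_mul]
        ring }
    fun _ _ => Commute.all _ _

lemma delta_apply0 (p : LaurentPolynomial A) :
    delta A p = p.coeff.sum fun k r => AddMonoidAlgebra.single k ((C r * T k : LaurentPolynomial A)) := by
  conv_lhs => rw [← AddMonoidAlgebra.sum_coeff_single p]
  rw [map_finsuppSum]
  refine Finsupp.sum_congr fun k _ => ?_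
  show AddMonoidAlgebra.liftNC _ _ _ = _
  rw [AddMonoidAlgebra.liftNC_single]
  rw [single_eq_C_mul_T (C (p.coeff k) * T k) k]
  simp only [RingHom.coe_comp, RingHom.comp_apply, Function.comp_apply, MonoidHom.coe_mk,
    OneHom.coe_mk, map_mul, toAdd_ofAdd]
  exact (mul_assoc _ _ _).symm

lemma delta_apply (p : LaurentPolynomial A) :
    (delta A p).coeff = p.coeff.sum fun k r => Finsupp.single k ((C r * T k : LaurentPolynomial A)) := by
  rw [delta_apply0, AddMonoidAlgebra.coeff_finsuppSum]
  rfl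

lemma sum_single_apply' {M N : Type*} [Zero M] [AddCommMonoid N] (p : ℤ →₀ M)
    (F : ℤ → M → N) (hF : ∀ k, F k 0 = 0) (j : ℤ) :
    (p.sum fun k a => Finsupp.single k (F k a)) j = F j (p j) := by
  classical
  rw [Finsupp.sum_apply, Finsupp.sum,
    Finset.sum_eq_single j (fun b _ hb => Finsupp.single_eq_of_ne' hb)
      (fun hj => by
        rw [Finsupp.single_eq_same, Finsupp.notMem_support_iff.mp hj, hF]),
    Finsupp.single_eq_same]

lemma sum_f_mul (d : ℤ) (hd0 : d ≠ 0) (u : Aˣ) (p q : LaurentPolynomial A)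
    (hp : ∀ k ∈ p.coeff.support, d ∣ k) (hq : ∀ k ∈ q.coeff.support, d ∣ k) :
    (p * q).coeff.sum (fun k r => r * ↑(u ^ (k / d))) =
      p.coeff.sum (fun k r => r * ↑(u ^ (k / d))) * q.coeff.sum (fun k r => r * ↑(u ^ (k / d))) := by
  classical
  set f : ℤ → A → A := fun k r => r * ↑(u ^ (k / d)) with hf
  have h0 : ∀ a : ℤ, f a 0 = 0 := fun a => zero_mul _
  have hadd : ∀ (a : ℤ) (b₁ b₂ : A), f a (b₁ + b₂) = f a b₁ + f a b₂ :=
    fun a b₁ b₂ => add_mul _ _ _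
  rw [AddMonoidAlgebra.mul_def]
  simp only [AddMonoidAlgebra.coeff_finsuppSum, AddMonoidAlgebra.coeff_single]
  rw [Finsupp.sum_sum_index (h := f) h0 hadd]
  conv_rhs => rw [Finsupp.sum_mul]
  refine Finsupp.sum_congr fun a₁ ha₁ => ?_
  rw [Finsupp.sum_sum_index (h := f) h0 hadd]
  conv_rhs => rw [Finsupp.mul_sum]
  refine Finsupp.sum_congr fun a₂ ha₂ => ?_
  rw [Finsupp.sum_single_index (h0 _)]
  show p.coeff a₁ * q.coeff a₂ * ↑(u ^ ((a₁ + a₂) / d)) = p.coeff a₁ * ↑(u ^ (a₁ / d)) * (q.coeff a₂ * ↑(u ^ (a₂ / d)))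
  obtain ⟨m, rfl⟩ := hp a₁ ha₁
  obtain ⟨n, rfl⟩ := hq a₂ ha₂
  rw [← mul_add, Int.mul_ediv_cancel_left _ hd0, Int.mul_ediv_cancel_left _ hd0,
    Int.mul_ediv_cancel_left _ hd0, zpow_add, Units.val_mul]
  ring

end Stmt14Helper

def IsGmCoaction {R : Type*} [CommRing R] (Φ : R →+* LaurentPolynomial R) : Prop :=
  (∀ a : R, (AddMonoidAlgebra.coeff (Φ a)).sum (fun _ r => r) = a) ∧
  (∀ a : R, Finsupp.mapRange ⇑Φ (map_zero Φ) (AddMonoidAlgebra.coeff (Φ a)) =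
    (AddMonoidAlgebra.coeff (Φ a)).sum fun k r => Finsupp.single k (LaurentPolynomial.C r * LaurentPolynomial.T k))

/-- multiplicative local slice theorem, part (b): with `s` a `G_m`-local
slice of degree `d` and denominator `c`, the weight of every nonzero semi-invariant of
`R_c` is divisible by `d`, and there is a retraction `π : R_c → (R_c)^{G_m}` ("`y ↦ 1`"):
a ring endomorphism of `R_c` landing in the invariants, restricting to the identity on
the invariants (hence a surjective homomorphism of `(R_c)^{G_m}`-algebras onto them),
with `π(s) = 1` and kernel the principal ideal `(s - 1)`. -/
theorem stmt14 {K R : Type*} [CommRing K] [CommRing R] [Algebra K R]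
    (Φ : R →ₐ[K] LaurentPolynomial R) (hΦ : IsGmCoaction Φ.toRingHom)
    (c : R) (hc : c ≠ 0) (w : ℤ) (hw : Φ c = LaurentPolynomial.C c * LaurentPolynomial.T w)
    (Φc : Localization.Away c →+* LaurentPolynomial (Localization.Away c))
    (hext : ∀ r : R, AddMonoidAlgebra.coeff (Φc (algebraMap R (Localization.Away c) r)) =
      Finsupp.mapRange (algebraMap R (Localization.Away c))
        (map_zero (algebraMap R (Localization.Away c))) (AddMonoidAlgebra.coeff (Φ r)))
    (d : ℤ) (hd : 0 < d)
    (s : Localization.Away c) (hunit : IsUnit s)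
    (hsemi : Φc s = LaurentPolynomial.C s * LaurentPolynomial.T (-d))
    (hslice : ∀ a : Localization.Away c,
      (∀ k : ℤ, d ≤ |k| → (AddMonoidAlgebra.coeff (Φc a)) k = 0) → Φc a = LaurentPolynomial.C a) :
    (∀ (a : Localization.Away c) (k : ℤ), a ≠ 0 →
      Φc a = LaurentPolynomial.C a * LaurentPolynomial.T k → d ∣ k) ∧
    ∃ π : Localization.Away c →+* Localization.Away c,
      (∀ a : Localization.Away c, Φc (π a) = LaurentPolynomial.C (π a)) ∧
      (∀ a : Localization.Away c, Φc a = LaurentPolynomial.C a → π a = a) ∧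
      π s = 1 ∧
      RingHom.ker π = Ideal.span {s - 1} := by
  classical
  have hd0 : d ≠ 0 := hd.ne'
  have hcu1 : ∀ a : R, ((Φ a : LaurentPolynomial R)).coeff.sum (fun _ r => r) = a := hΦ.1
  have hco1 : ∀ a : R, Finsupp.mapRange ⇑Φ (map_zero Φ) (Φ a).coeff =
      (Φ a).coeff.sum fun k r => Finsupp.single k (LaurentPolynomial.C r * LaurentPolynomial.T k) :=
    hΦ.2
  -- counit for Φc
  have hcounit : ∀ x : Localization.Away c, (Φc x).coeff.sum (fun _ r => r) = x := by
    have hcomp : (Stmt14Helper.eps _).comp Φc = RingHom.id _ := by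
      refine IsLocalization.ringHom_ext (Submonoid.powers c) (RingHom.ext fun r => ?_)
      simp only [RingHom.comp_apply, RingHom.id_apply]
      rw [Stmt14Helper.eps_apply, hext r,
        Finsupp.sum_mapRange_index (fun _ => rfl), ← map_finsuppSum, hcu1 r]
    intro x
    have h := RingHom.congr_fun hcomp x
    rw [RingHom.comp_apply, Stmt14Helper.eps_apply] at h
    simpa using h
  -- coassociativity for Φc, componentwise
  have hcoassoc : ∀ (x : Localization.Away c) (k : ℤ),
      Φc ((Φc x).coeff k) = LaurentPolynomial.C ((Φc x).coeff k) * LaurentPolynomial.T k := by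
    have hcomp : (Stmt14Helper.mr Φc).comp Φc = (Stmt14Helper.delta _).comp Φc := by
      refine IsLocalization.ringHom_ext (Submonoid.powers c) (RingHom.ext fun r => ?_)
      simp only [RingHom.comp_apply]
      rw [← AddMonoidAlgebra.coeff_inj, Stmt14Helper.mr_apply, Stmt14Helper.delta_apply]
      ext j
      rw [Finsupp.mapRange_apply,
        Stmt14Helper.sum_single_apply' _ _ (fun k => by simp) j, hext r]
      simp only [Finsupp.mapRange_apply]
      have hb : Φ ((Φ r).coeff j) = AddMonoidAlgebra.single j ((Φ r).coeff j) := by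
        have h2 := congrArg (fun q : ℤ →₀ LaurentPolynomial R => q j) (hco1 r)
        rw [Finsupp.mapRange_apply,
          Stmt14Helper.sum_single_apply' _ _ (fun k => by simp) j] at h2
        rw [h2, single_eq_C_mul_T]
      rw [hext ((Φ r).coeff j), hb, ← single_eq_C_mul_T]
      simp only [AddMonoidAlgebra.coeff_single, Finsupp.mapRange_single]
    intro x k
    have h := RingHom.congr_fun hcomp x
    rw [RingHom.comp_apply, RingHom.comp_apply] at h
    have h2 := congrArg (fun q : LaurentPolynomial (LaurentPolynomial _) => q.coeff k) h
    rw [Stmt14Helper.mr_apply, Stmt14Helper.delta_apply] at h2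
    rw [Finsupp.mapRange_apply, Stmt14Helper.sum_single_apply' _ _ (fun k => by simp) k] at h2
    exact h2
  obtain ⟨u, hus⟩ := hunit
  have hCsT : IsUnit (LaurentPolynomial.C s * LaurentPolynomial.T (-d) :
      LaurentPolynomial (Localization.Away c)) :=
    ((hus ▸ u.isUnit).map LaurentPolynomial.C).mul (isUnit_T (-d))
  -- action on powers of u
  have hΦu : ∀ m : ℤ, Φc ↑(u ^ m) =
      LaurentPolynomial.C (↑(u ^ m) : Localization.Away c) *
        LaurentPolynomial.T (-(d * m)) := by
    intro m
    induction m using Int.induction_on with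
    | zero => simp
    | succ n ih =>
        have h1 : (u ^ ((n : ℤ) + 1)) = u ^ (n : ℤ) * u := zpow_add_one u n
        rw [h1, Units.val_mul, map_mul, ih, hus, hsemi,
          show (-(d * ((n : ℤ) + 1))) = (-(d * (n : ℤ))) + (-d) by ring, T_add, map_mul]
        ring
    | pred n ih =>
        have hpow : (u ^ (-(n : ℤ))) = u ^ (-(n : ℤ) - 1) * u := by
          rw [← zpow_add_one]
          norm_num
        have hmul : Φc ↑(u ^ (-(n : ℤ) - 1)) * (LaurentPolynomial.C s * LaurentPolynomial.T (-d)) =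
            (LaurentPolynomial.C (↑(u ^ (-(n : ℤ) - 1)) : Localization.Away c) *
              LaurentPolynomial.T (-(d * (-(n : ℤ) - 1)))) *
              (LaurentPolynomial.C s * LaurentPolynomial.T (-d)) := by
          calc Φc ↑(u ^ (-(n : ℤ) - 1)) * (LaurentPolynomial.C s * LaurentPolynomial.T (-d))
              = Φc (↑(u ^ (-(n : ℤ) - 1)) * s) := by rw [map_mul, hsemi]
            _ = Φc ↑(u ^ (-(n : ℤ))) := by rw [hpow, Units.val_mul, hus]
            _ = LaurentPolynomial.C (↑(u ^ (-(n : ℤ))) : Localization.Away c) *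
                  LaurentPolynomial.T (-(d * (-(n : ℤ)))) := ih
            _ = _ := by
                rw [hpow, Units.val_mul, hus,
                  show (-(d * (-(n : ℤ)))) = (-(d * (-(n : ℤ) - 1))) + (-d) by ring,
                  T_add, map_mul]
                ring
        exact hCsT.mul_right_cancel hmul
  -- part 1 : weights are divisible by d
  have part1 : ∀ (a : Localization.Away c) (k : ℤ), a ≠ 0 →
      Φc a = LaurentPolynomial.C a * LaurentPolynomial.T k → d ∣ k := by
    intro a k ha hak
    have hbne : a * (↑(u ^ (k / d)) : Localization.Away c) ≠ 0 := by
      intro h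
      apply ha
      have h2 := congrArg (fun x => x * (↑((u ^ (k / d))⁻¹) : Localization.Away c)) h
      simpa [mul_assoc, Units.mul_inv] using h2
    have hΦb : Φc (a * ↑(u ^ (k / d))) =
        LaurentPolynomial.C (a * (↑(u ^ (k / d)) : Localization.Away c)) *
          LaurentPolynomial.T (k % d) := by
      rw [map_mul, hak, hΦu, map_mul,
        show k % d = k + (-(d * (k / d))) from by rw [Int.emod_def]; ring, T_add]
      ring
    have hmem : Φc (a * ↑(u ^ (k / d))) =
        LaurentPolynomial.C (a * (↑(u ^ (k / d)) : Localization.Away c)) := by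
      apply hslice
      intro j hj
      rw [hΦb, ← single_eq_C_mul_T, AddMonoidAlgebra.coeff_single]
      apply Finsupp.single_eq_of_ne'
      intro hjk
      have h1 : 0 ≤ k % d := Int.emod_nonneg k hd0
      have h2 : k % d < d := Int.emod_lt_of_pos k hd
      rw [← hjk, abs_of_nonneg h1] at hj
      omega
    have heq : (AddMonoidAlgebra.single (k % d) (a * (↑(u ^ (k / d)) : Localization.Away c)) :
        LaurentPolynomial (Localization.Away c)) =
        AddMonoidAlgebra.single 0 (a * (↑(u ^ (k / d)) : Localization.Away c)) := by
      rw [single_eq_C_mul_T, single_eq_C_mul_T, T_zero, mul_one, ← hΦb]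
      exact hmem
    have hmod : k % d = 0 := by
      by_contra hne
      have h := congrArg
        (fun p : LaurentPolynomial (Localization.Away c) => p.coeff (k % d)) heq
      simp only [AddMonoidAlgebra.coeff_single, Finsupp.single_apply] at h
      rw [if_pos trivial, if_neg (fun hh : (0:ℤ) = k % d => hne hh.symm)] at h
      exact hbne h
    exact Int.dvd_of_emod_eq_zero hmod
  have hsupp : ∀ (x : Localization.Away c) (k : ℤ), (Φc x).coeff k ≠ 0 → d ∣ k :=
    fun x k h => part1 _ k h (hcoassoc x k)
  -- the retraction π
  let F : ℤ → Localization.Away c → Localization.Away c :=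
    fun k r => r * ↑(u ^ (k / d))
  have hF0 : ∀ k, F k 0 = 0 := fun k => zero_mul _
  let π : Localization.Away c →+* Localization.Away c :=
    { toFun := fun a => (Φc a).coeff.sum F
      map_one' := by
        show (Φc 1).coeff.sum F = 1
        rw [map_one, AddMonoidAlgebra.one_def, AddMonoidAlgebra.coeff_single, Finsupp.sum_single_index (hF0 0)]
        show (1 : Localization.Away c) * ↑(u ^ ((0:ℤ) / d)) = 1
        rw [Int.zero_ediv, zpow_zero, Units.val_one, mul_one]
      map_zero' := by
        show (Φc 0).coeff.sum F = 0
        rw [map_zero, AddMonoidAlgebra.coeff_zero, Finsupp.sum_zero_index]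
      map_mul' := fun a b => by
        show (Φc (a * b)).coeff.sum F = (Φc a).coeff.sum F * (Φc b).coeff.sum F
        rw [map_mul]
        exact Stmt14Helper.sum_f_mul d hd0 u (Φc a) (Φc b)
          (fun k hk => hsupp a k (Finsupp.mem_support_iff.mp hk))
          (fun k hk => hsupp b k (Finsupp.mem_support_iff.mp hk))
      map_add' := fun a b => by
        show (Φc (a + b)).coeff.sum F = (Φc a).coeff.sum F + (Φc b).coeff.sum F
        rw [map_add, AddMonoidAlgebra.coeff_add]
        exact Finsupp.sum_add_index' hF0 (fun k r₁ r₂ => add_mul _ _ _) }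
  have hπdef : ∀ a, π a = (Φc a).coeff.sum F := fun _ => rfl
  -- π lands in invariants
  have hπinv : ∀ a : Localization.Away c, Φc (π a) = LaurentPolynomial.C (π a) := by
    intro a
    rw [hπdef, map_finsuppSum, map_finsuppSum]
    refine Finsupp.sum_congr fun k hk => ?_
    obtain ⟨m, hm⟩ := hsupp a k (Finsupp.mem_support_iff.mp hk)
    show Φc ((Φc a).coeff k * ↑(u ^ (k / d))) = LaurentPolynomial.C ((Φc a).coeff k * ↑(u ^ (k / d)))
    rw [map_mul, hcoassoc a k, hΦu, map_mul, Int.mul_ediv_cancel' ⟨m, hm⟩,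
      show LaurentPolynomial.C ((Φc a).coeff k) * T k *
          (LaurentPolynomial.C (↑(u ^ (k / d)) : Localization.Away c) * T (-k)) =
        (LaurentPolynomial.C ((Φc a).coeff k) *
          LaurentPolynomial.C (↑(u ^ (k / d)) : Localization.Away c)) * (T k * T (-k)) from by
        ring, ← T_add, add_neg_cancel, T_zero, mul_one]
  -- π is the identity on invariants
  have hπid : ∀ a : Localization.Away c, Φc a = LaurentPolynomial.C a → π a = a := by
    intro a ha
    have h1 : Φc a = AddMonoidAlgebra.single 0 a := by
      rw [ha, show (LaurentPolynomial.C a : LaurentPolynomial (Localization.Away c)) =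
        LaurentPolynomial.C a * T 0 from by rw [T_zero, mul_one]]
      exact (single_eq_C_mul_T a 0).symm
    rw [hπdef, h1, AddMonoidAlgebra.coeff_single, Finsupp.sum_single_index (hF0 0)]
    show a * ↑(u ^ ((0:ℤ) / d)) = a
    rw [Int.zero_ediv, zpow_zero, Units.val_one, mul_one]
  -- π s = 1
  have hπs : π s = 1 := by
    have h1 : Φc s = AddMonoidAlgebra.single (-d) s := by
      rw [hsemi, ← single_eq_C_mul_T]
    rw [hπdef, h1, AddMonoidAlgebra.coeff_single, Finsupp.sum_single_index (hF0 _)]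
    show s * ↑(u ^ ((-d) / d)) = 1
    rw [show (-d) = d * (-1) from by ring, Int.mul_ediv_cancel_left _ hd0, zpow_neg_one,
      ← hus, Units.mul_inv]
  -- kernel of π
  have key : ∀ m : ℤ, (1 : Localization.Away c) - ↑(u ^ m) ∈ Ideal.span {s - 1} := by
    intro m
    rw [← Ideal.Quotient.eq_zero_iff_mem, RingHom.map_sub, RingHom.map_one]
    have hs1 : Ideal.Quotient.mk (Ideal.span {s - 1}) s = 1 := by
      have h := Ideal.Quotient.eq_zero_iff_mem.mpr
        (Ideal.subset_span (Set.mem_singleton (s - 1)))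
      rwa [RingHom.map_sub, RingHom.map_one, sub_eq_zero] at h
    have hu1 : (Units.map (Ideal.Quotient.mk (Ideal.span {s - 1})).toMonoidHom u) = 1 := by
      ext
      simp [hus, hs1]
    have h3 : Ideal.Quotient.mk (Ideal.span {s - 1}) ↑(u ^ m) = 1 := by
      calc Ideal.Quotient.mk (Ideal.span {s - 1}) ↑(u ^ m)
          = ↑(Units.map (Ideal.Quotient.mk (Ideal.span {s - 1})).toMonoidHom (u ^ m)) := rfl
        _ = ↑((Units.map (Ideal.Quotient.mk (Ideal.span {s - 1})).toMonoidHom u) ^ m) := by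
            rw [map_zpow]
        _ = 1 := by rw [hu1]; simp
    rw [h3, sub_self]
  have hker : RingHom.ker π = Ideal.span {s - 1} := by
    apply le_antisymm
    · intro a ha
      rw [RingHom.mem_ker] at ha
      have hrep : a = (Φc a).coeff.sum fun k r =>
          r * ((1 : Localization.Away c) - ↑(u ^ (k / d))) := by
        calc a = (Φc a).coeff.sum (fun _ r => r) - π a := by rw [ha, sub_zero, hcounit a]
          _ = _ := by
            rw [hπdef, ← Finsupp.sum_sub]
            refine Finsupp.sum_congr fun k _ => ?_
            show (Φc a).coeff k - (Φc a).coeff k * ↑(u ^ (k / d)) = _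
            ring
      rw [hrep, Finsupp.sum]
      exact Ideal.sum_mem _ fun k _ => Ideal.mul_mem_left _ _ (key (k / d))
    · rw [Ideal.span_le, Set.singleton_subset_iff]
      show s - 1 ∈ RingHom.ker π
      rw [RingHom.mem_ker, map_sub, hπs, map_one, sub_self]
  exact ⟨part1, π, hπinv, hπid, hπs, hker⟩
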